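/- Let W be a tame 𝓜-module whose underlying abelian group is finitely generated. Then the 𝓜-action on W is trivial. -/

import Mathlib

def InjM : Submonoid (Function.End ℕ) where
  carrier := {f | Function.Injective f}
  one_mem' := fun _ _ h => h
  mul_mem' := fun hf hg => hf.comp hg

def permToInj (e : Equiv.Perm ℕ) : InjM := ⟨(e : ℕ → ℕ), e.injective⟩

lemma permToInj_mul (e f : Equiv.Perm ℕ) :
    permToInj (e * f) = permToInj e * permToInj f := rfl

lemma permToInj_one : permToInj 1 = 1 := rfl

lemma permToInj_apply (e : Equiv.Perm ℕ) (x : ℕ) : (permToInj e).1 x = e x := rfl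

/-- the basic involution: swaps 2k ↔ 2k+1 for k ≥ M -/
def sFun (M : ℕ) (j : ℕ) : ℕ :=
  if j < 2*M then j else if j % 2 = 0 then j + 1 else j - 1

lemma sFun_invol (M : ℕ) : Function.Involutive (sFun M) := by
  intro j
  simp only [sFun]
  split_ifs <;> omega

def sPerm (M : ℕ) : Equiv.Perm ℕ := (sFun_invol M).toPerm

lemma sPerm_apply (M j : ℕ) : sPerm M j = sFun M j := rfl

set_option maxHeartbeats 2000000 in
lemma key_conj (a M : ℕ) (ha : a < 2*M) :
    Equiv.swap a (2*M) * sPerm (M+1) =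
      Equiv.swap a (2*M+1) * sPerm M * Equiv.swap a (2*M+1) := by
  ext x
  simp only [Equiv.Perm.mul_apply, sPerm_apply, sFun, Equiv.swap_apply_def]
  split_ifs <;> omega

theorem stmt_10 {W : Type*} [AddCommGroup W] [DistribMulAction InjM W]
    (tame : ∀ w : W, ∃ n : ℕ, ∀ f : InjM, (∀ i < n, f.1 i = i) → f • w = w)
    (hfg : AddGroup.FG W) :
    ∀ (f : InjM) (w : W), f • w = w := by
  classical
  -- Step 0: a uniform bound N valid for all of W
  obtain ⟨S, hS⟩ : ∃ S : Finset W, AddSubgroup.closure (S : Set W) = ⊤ :=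
    AddGroup.fg_def.mp hfg
  set N : ℕ := S.sup fun w => (tame w).choose with hNdef
  have hN : ∀ f : InjM, (∀ i < N, f.1 i = i) → ∀ w : W, f • w = w := by
    intro f hf w
    have hw : w ∈ AddSubgroup.closure (S : Set W) := hS ▸ AddSubgroup.mem_top w
    induction hw using AddSubgroup.closure_induction with
    | mem x hx =>
        refine (tame x).choose_spec f fun i hi => hf i ?_
        exact lt_of_lt_of_le hi (Finset.le_sup (f := fun w => (tame w).choose) hx)
    | zero => exact smul_zero _
    | add x y _ _ hx hy => rw [smul_add, hx, hy]
    | neg x _ hx => rw [smul_neg, hx]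
  -- Step 1: transpositions act trivially
  have hcore : ∀ a M : ℕ, a < 2*M → N ≤ 2*M →
      ∀ w : W, permToInj (Equiv.swap a (2*M)) • w = w := by
    intro a M haM hNM w
    have hσ : ∀ v : W, permToInj (sPerm M) • v = v := by
      intro v
      refine hN _ (fun i hi => ?_) v
      show sPerm M i = i
      rw [sPerm_apply, sFun, if_pos (by omega)]
    have hσ' : ∀ v : W, permToInj (sPerm (M+1)) • v = v := by
      intro v
      refine hN _ (fun i hi => ?_) v
      show sPerm (M+1) i = i
      rw [sPerm_apply, sFun, if_pos (by omega)]
    calc permToInj (Equiv.swap a (2*M)) • w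
        = permToInj (Equiv.swap a (2*M)) • (permToInj (sPerm (M+1)) • w) := by
          rw [hσ']
      _ = permToInj (Equiv.swap a (2*M) * sPerm (M+1)) • w := by
          rw [permToInj_mul, mul_smul]
      _ = permToInj (Equiv.swap a (2*M+1) * sPerm M * Equiv.swap a (2*M+1)) • w := by
          rw [key_conj a M haM]
      _ = permToInj (Equiv.swap a (2*M+1)) •
            (permToInj (sPerm M) • (permToInj (Equiv.swap a (2*M+1)) • w)) := by
          rw [permToInj_mul, permToInj_mul, mul_smul, mul_smul]
      _ = permToInj (Equiv.swap a (2*M+1)) •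
            (permToInj (Equiv.swap a (2*M+1)) • w) := by rw [hσ]
      _ = permToInj (Equiv.swap a (2*M+1) * Equiv.swap a (2*M+1)) • w := by
          rw [permToInj_mul, mul_smul]
      _ = w := by rw [Equiv.swap_mul_self, permToInj_one, one_smul]
  have hswap : ∀ (a b : ℕ) (w : W), permToInj (Equiv.swap a b) • w = w := by
    intro a b w
    rcases eq_or_ne a b with rfl | hab
    · rw [Equiv.swap_self]
      exact one_smul _ w
    · set M : ℕ := a + b + N + 1 with hM
      set c : ℕ := 2 * M with hc
      have hac : ∀ v : W, permToInj (Equiv.swap a c) • v = v :=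
        hcore a M (by omega) (by omega)
      have hbc : ∀ v : W, permToInj (Equiv.swap b c) • v = v :=
        hcore b M (by omega) (by omega)
      have hid : Equiv.swap a b = Equiv.swap c a * Equiv.swap b c * Equiv.swap c a := by
        rw [Equiv.swap_mul_swap_mul_swap (by omega : b ≠ c) hab.symm]
      rw [hid, Equiv.swap_comm c a, permToInj_mul, permToInj_mul, mul_smul, mul_smul,
        hac, hbc, hac]
  -- Step 2: induction on the number of non-fixed points below N
  have main : ∀ (k : ℕ) (f : InjM) (w : W),
      ((Finset.range N).filter fun i => f.1 i ≠ i).card ≤ k → f • w = w := by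
    intro k
    induction k with
    | zero =>
        intro f w h
        refine hN f (fun i hi => ?_) w
        by_contra hne
        have : i ∈ (Finset.range N).filter fun i => f.1 i ≠ i := by
          simp [Finset.mem_filter, Finset.mem_range, hi, hne]
        have := Finset.card_pos.mpr ⟨i, this⟩
        omega
    | succ k ih =>
        intro f w hcard
        by_cases hfix : ∀ i < N, f.1 i = i
        · exact hN f hfix w
        · push_neg at hfix
          obtain ⟨i₀, hi₀N, hi₀⟩ := hfix
          set τ : Equiv.Perm ℕ := Equiv.swap (f.1 i₀) i₀ with hτ
          set g : InjM := permToInj τ * f with hg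
          have hgapp : ∀ i, g.1 i = τ (f.1 i) := fun i => rfl
          have hgcount : ((Finset.range N).filter fun i => g.1 i ≠ i).card ≤ k := by
            have hsub : ((Finset.range N).filter fun i => g.1 i ≠ i) ⊆
                (((Finset.range N).filter fun i => f.1 i ≠ i).erase i₀) := by
              intro i hi
              rw [Finset.mem_filter, Finset.mem_range] at hi
              obtain ⟨hiN, hgi⟩ := hi
              have hfne : f.1 i ≠ i := by
                intro hfi
                apply hgi
                rw [hgapp, hfi, hτ]
                refine Equiv.swap_apply_of_ne_of_ne ?_ ?_
                · intro h
                  have hii : i = i₀ := f.2 (hfi.trans h)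
                  exact hi₀ (by rw [← h, hii])
                · intro h; rw [h] at hfi; exact hi₀ hfi
              have hne₀ : i ≠ i₀ := by
                intro h
                apply hgi
                rw [h, hgapp, hτ, Equiv.swap_apply_left]
              rw [Finset.mem_erase, Finset.mem_filter, Finset.mem_range]
              exact ⟨hne₀, hiN, hfne⟩
            have hmem : i₀ ∈ (Finset.range N).filter fun i => f.1 i ≠ i := by
              simp [Finset.mem_filter, Finset.mem_range, hi₀N, hi₀]
            have := Finset.card_le_card hsub
            rw [Finset.card_erase_of_mem hmem] at this
            omega
          have hff : f = permToInj τ * g := by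
            rw [hg, ← mul_assoc, ← permToInj_mul, Equiv.swap_mul_self, permToInj_one,
              one_mul]
          calc f • w = (permToInj τ * g) • w := by rw [← hff]
            _ = permToInj τ • (g • w) := mul_smul _ _ _
            _ = permToInj τ • w := by rw [ih g w (by convert hgcount)]
            _ = w := hswap _ _ w
  intro f w
  exact main _ f w le_rfl
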